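/- Suppose in a mixed unit interval representation I of a graph G there is a vertex u with I(u) = (0,1] (open-closed), and no vertex v with I(v) = [0,1]. Then G has another mixed unit interval representation with strictly fewer open-closed intervals and the same number of closed-open intervals. (Explicitly: shift by -ε/2 every interval whose left endpoint is an integer ≤ 0 other than I(u), and replace I(u) by [0,1], where ε is the minimum positive distance between distinct interval endpoints.) -/

import Mathlib

open Set

def IsUnitCC (I : Set ℝ) : Prop := ∃ x : ℝ, I = Set.Icc x (x + 1)
def IsUnitOO (I : Set ℝ) : Prop := ∃ x : ℝ, I = Set.Ioo x (x + 1)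
def IsUnitCO (I : Set ℝ) : Prop := ∃ x : ℝ, I = Set.Ico x (x + 1)
def IsUnitOC (I : Set ℝ) : Prop := ∃ x : ℝ, I = Set.Ioc x (x + 1)
def IsUnitInterval (I : Set ℝ) : Prop := IsUnitCC I ∨ IsUnitOO I ∨ IsUnitCO I ∨ IsUnitOC I

def IsRep {V : Type*} (G : SimpleGraph V) (f : V → Set ℝ) : Prop :=
  ∀ u v : V, u ≠ v → (G.Adj u v ↔ (f u ∩ f v).Nonempty)

def MixedUIG {V : Type*} (G : SimpleGraph V) : Prop :=
  ∃ f : V → Set ℝ, IsRep G f ∧ ∀ v, IsUnitInterval (f v)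

def AlmostMixedUIG {V : Type*} (G : SimpleGraph V) : Prop :=
  ∃ f : V → Set ℝ, IsRep G f ∧ ∀ v, IsUnitCC (f v) ∨ IsUnitOO (f v) ∨ IsUnitCO (f v)

def TwinFree {V : Type*} (G : SimpleGraph V) : Prop :=
  ∀ u v : V, insert u (G.neighborSet u) = insert v (G.neighborSet v) → u = v

section Aux

lemma aux_overlap {I J : Set ℝ} {a b : ℝ} (hI : Ioo a (a+1) ⊆ I) (hJ : Ioo b (b+1) ⊆ J)
    (h1 : a < b + 1) (h2 : b < a + 1) : (I ∩ J).Nonempty :=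
  ⟨(a + b + 1)/2, hI ⟨by linarith, by linarith⟩, hJ ⟨by linarith, by linarith⟩⟩

lemma aux_touch {I J : Set ℝ} {a m s : ℝ} (hI : I ⊆ Icc a m) (hJ : J ⊆ Icc m s) :
    (I ∩ J).Nonempty ↔ (m ∈ I ∧ m ∈ J) := by
  constructor
  · rintro ⟨x, hx1, hx2⟩
    have h1 := (hI hx1).2
    have h2 := (hJ hx2).1
    have hxm : x = m := le_antisymm h1 h2
    subst hxm; exact ⟨hx1, hx2⟩
  · rintro ⟨h1, h2⟩; exact ⟨m, h1, h2⟩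

lemma aux_sInf {s : Set ℝ} {x : ℝ}
    (h : s = Icc x (x+1) ∨ s = Ioo x (x+1) ∨ s = Ico x (x+1) ∨ s = Ioc x (x+1)) :
    sInf s = x := by
  have h1 : x < x + 1 := by linarith
  rcases h with h|h|h|h <;> subst h
  · exact csInf_Icc h1.le
  · exact csInf_Ioo h1
  · exact csInf_Ico h1
  · exact csInf_Ioc h1

lemma aux_same_left {s : Set ℝ} {x y : ℝ}
    (hx : s = Icc x (x+1) ∨ s = Ioo x (x+1) ∨ s = Ico x (x+1) ∨ s = Ioc x (x+1))
    (hy : s = Icc y (y+1) ∨ s = Ioo y (y+1) ∨ s = Ico y (y+1) ∨ s = Ioc y (y+1)) :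
    x = y := by rw [← aux_sInf hx, aux_sInf hy]

lemma aux_not_OC {s : Set ℝ} {x : ℝ}
    (h : s = Icc x (x+1) ∨ s = Ioo x (x+1) ∨ s = Ico x (x+1)) : ¬ IsUnitOC s := by
  rintro ⟨y, hy⟩
  have hxy : x = y := aux_same_left (by tauto) (Or.inr (Or.inr (Or.inr hy)))
  subst hxy
  rcases h with h|h|h
  · have hx : x ∈ s := by rw [h]; exact left_mem_Icc.mpr (by linarith)
    rw [hy] at hx; exact absurd hx.1 (lt_irrefl x)
  · have hx : x + 1 ∈ s := by rw [hy]; exact right_mem_Ioc.mpr (by linarith)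
    rw [h] at hx; exact absurd hx.2 (lt_irrefl _)
  · have hx : x + 1 ∈ s := by rw [hy]; exact right_mem_Ioc.mpr (by linarith)
    rw [h] at hx; exact absurd hx.2 (lt_irrefl _)

lemma aux_not_CO {s : Set ℝ} {x : ℝ}
    (h : s = Icc x (x+1) ∨ s = Ioo x (x+1) ∨ s = Ioc x (x+1)) : ¬ IsUnitCO s := by
  rintro ⟨y, hy⟩
  have hxy : x = y := aux_same_left (by tauto) (Or.inr (Or.inr (Or.inl hy)))
  subst hxy
  rcases h with h|h|h
  · have hx : x + 1 ∈ s := by rw [h]; exact right_mem_Icc.mpr (by linarith)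
    rw [hy] at hx; exact absurd hx.2 (lt_irrefl _)
  · have hx : x ∈ s := by rw [hy]; exact left_mem_Ico.mpr (by linarith)
    rw [h] at hx; exact absurd hx.1 (lt_irrefl _)
  · have hx : x ∈ s := by rw [hy]; exact left_mem_Ico.mpr (by linarith)
    rw [h] at hx; exact absurd hx.1 (lt_irrefl _)

lemma aux_shift_OC (c : ℝ) (s : Set ℝ) : IsUnitOC ((fun x => x - c) '' s) ↔ IsUnitOC s := by
  constructor
  · rintro ⟨y, h⟩
    refine ⟨y + c, ?_⟩
    have hs : s = (fun x => x + c) '' ((fun x => x - c) '' s) := by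
      rw [Set.image_image]; simp
    rw [hs, h, Set.image_add_const_Ioc]
    have he : y + 1 + c = y + c + 1 := by ring
    rw [he]
  · rintro ⟨y, h⟩
    refine ⟨y - c, ?_⟩
    rw [h, Set.image_sub_const_Ioc]
    have he : y + 1 - c = y - c + 1 := by ring
    rw [he]

lemma aux_shift_CO (c : ℝ) (s : Set ℝ) : IsUnitCO ((fun x => x - c) '' s) ↔ IsUnitCO s := by
  constructor
  · rintro ⟨y, h⟩
    refine ⟨y + c, ?_⟩
    have hs : s = (fun x => x + c) '' ((fun x => x - c) '' s) := by
      rw [Set.image_image]; simp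
    rw [hs, h, Set.image_add_const_Ico]
    have he : y + 1 + c = y + c + 1 := by ring
    rw [he]
  · rintro ⟨y, h⟩
    refine ⟨y - c, ?_⟩
    rw [h, Set.image_sub_const_Ico]
    have he : y + 1 - c = y - c + 1 := by ring
    rw [he]

lemma aux_shift_unit (c : ℝ) (s : Set ℝ) (h : IsUnitInterval s) :
    IsUnitInterval ((fun x => x - c) '' s) := by
  rcases h with ⟨y, h⟩|⟨y, h⟩|⟨y, h⟩|⟨y, h⟩ <;> subst h
  · exact Or.inl ⟨y - c, by rw [Set.image_sub_const_Icc]; ring_nf⟩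
  · exact Or.inr (Or.inl ⟨y - c, by rw [Set.image_sub_const_Ioo]; ring_nf⟩)
  · exact Or.inr (Or.inr (Or.inl ⟨y - c, by rw [Set.image_sub_const_Ico]; ring_nf⟩))
  · exact Or.inr (Or.inr (Or.inr ⟨y - c, by rw [Set.image_sub_const_Ioc]; ring_nf⟩))

end Aux

theorem stmt14 {V : Type*} [Fintype V] (G : SimpleGraph V) (f : V → Set ℝ)
    (hrep : IsRep G f) (hunit : ∀ v, IsUnitInterval (f v))
    (hinj : Function.Injective f)
    (u : V) (hu : f u = Set.Ioc 0 1)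
    (hno : ∀ v : V, f v ≠ Set.Icc 0 1) :
    ∃ g : V → Set ℝ, IsRep G g ∧ (∀ v, IsUnitInterval (g v)) ∧
      {v | IsUnitOC (g v)}.ncard < {v | IsUnitOC (f v)}.ncard ∧
      {v | IsUnitCO (g v)}.ncard = {v | IsUnitCO (f v)}.ncard := by
  classical
  have hform : ∀ v, ∃ a : ℝ,
      f v = Icc a (a+1) ∨ f v = Ioo a (a+1) ∨ f v = Ico a (a+1) ∨ f v = Ioc a (a+1) := by
    intro v
    rcases hunit v with ⟨a, h⟩|⟨a, h⟩|⟨a, h⟩|⟨a, h⟩ <;> exact ⟨a, by tauto⟩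
  choose l hl using hform
  have hIoo : ∀ v, Ioo (l v) (l v + 1) ⊆ f v := by
    intro v
    rcases hl v with h|h|h|h <;> rw [h] <;>
      first
        | exact Ioo_subset_Icc_self
        | exact Ioo_subset_Ico_self
        | exact Ioo_subset_Ioc_self
  have hIcc : ∀ v, f v ⊆ Icc (l v) (l v + 1) := by
    intro v
    rcases hl v with h|h|h|h <;> rw [h] <;>
      first
        | exact Ioo_subset_Icc_self
        | exact Ico_subset_Icc_self
        | exact Ioc_subset_Icc_self
  have hlu : l u = 0 := by
    refine aux_same_left (hl u) ?_
    right; right; right; rw [hu]; norm_num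
  -- the set of vertices to be shifted
  set S : Set V := {v | v ≠ u ∧ ∃ k : ℤ, (k:ℝ) ≤ 0 ∧ l v = k} with hSdef
  have hSmem : ∀ v, v ∈ S ↔ (v ≠ u ∧ ∃ k : ℤ, (k:ℝ) ≤ 0 ∧ l v = k) := by
    intro v; rw [hSdef]; exact Iff.rfl
  -- epsilon
  obtain ⟨ε, hε0, hε1, hgap⟩ : ∃ ε : ℝ, 0 < ε ∧ ε ≤ 1 ∧
      ∀ v w : V, l v + 1 ≠ l w → ε ≤ |l v + 1 - l w| := by
    set T : Finset ℝ := insert (1:ℝ) (((Finset.univ : Finset (V × V)).image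
      (fun p => |l p.1 + 1 - l p.2|)).filter (fun x => 0 < x)) with hT
    have h1T : (1:ℝ) ∈ T := Finset.mem_insert_self _ _
    refine ⟨T.min' (show T.Nonempty from ⟨1, h1T⟩), ?_, Finset.min'_le _ _ h1T, ?_⟩
    · refine (Finset.lt_min'_iff _ _).mpr ?_
      intro y hy
      rw [hT, Finset.mem_insert] at hy
      rcases hy with h|h
      · rw [h]; norm_num
      · exact (Finset.mem_filter.mp h).2
    · intro v w hne
      apply Finset.min'_le
      rw [hT, Finset.mem_insert]
      right
      refine Finset.mem_filter.mpr ⟨Finset.mem_image.mpr ⟨(v, w), Finset.mem_univ _, rfl⟩, ?_⟩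
      exact abs_pos.mpr (sub_ne_zero.mpr hne)
  set c : ℝ := ε/2 with hc
  have hc0 : 0 < c := by rw [hc]; linarith
  have hc1 : c < 1 := by rw [hc]; linarith
  set g : V → Set ℝ := fun v => if v = u then Icc 0 1 else
      (if v ∈ S then (fun x => x - c) '' f v else f v) with hgdef
  have hgu : g u = Icc 0 1 := by simp [hgdef]
  have hgS : ∀ v, v ≠ u → v ∈ S → g v = (fun x => x - c) '' f v := by
    intro v h1 h2; simp only [hgdef]; rw [if_neg h1, if_pos h2]
  have hgO : ∀ v, v ≠ u → v ∉ S → g v = f v := by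
    intro v h1 h2; simp only [hgdef]; rw [if_neg h1, if_neg h2]
  -- bounds for shifted intervals
  have hgIcc : ∀ v, v ≠ u → v ∈ S → g v ⊆ Icc (l v - c) (l v - c + 1) := by
    intro v h1 h2
    rw [hgS v h1 h2]
    rintro x ⟨y, hy, rfl⟩
    have hb := hIcc v hy
    dsimp only
    exact ⟨by linarith [hb.1], by linarith [hb.2]⟩
  have hgIoo : ∀ v, v ≠ u → v ∈ S → Ioo (l v - c) (l v - c + 1) ⊆ g v := by
    intro v h1 h2
    rw [hgS v h1 h2]
    intro x hx
    exact ⟨x + c, hIoo v ⟨by linarith [hx.1], by linarith [hx.2]⟩, by simp⟩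
  -- bounds for u
  have hfuIoo : Ioo (0:ℝ) (0+1) ⊆ f u := by
    rw [hu]; intro x hx; exact ⟨hx.1, by linarith [hx.2]⟩
  have hfuIcc : f u ⊆ Icc (0:ℝ) (0+1) := by
    rw [hu]; intro x hx; exact ⟨hx.1.le, by linarith [hx.2]⟩
  have hguIoo : Ioo (0:ℝ) (0+1) ⊆ g u := by
    rw [hgu]; intro x hx; exact ⟨hx.1.le, by linarith [hx.2]⟩
  have hguIcc : g u ⊆ Icc (0:ℝ) (0+1) := by
    rw [hgu]; intro x hx; exact ⟨hx.1, by linarith [hx.2]⟩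
  -- case: u vs S
  have case_uS : ∀ w ∈ S, ((f u ∩ f w).Nonempty ↔ (g u ∩ g w).Nonempty) := by
    intro w hw
    obtain ⟨hwne, k, hk0, hk⟩ := (hSmem w).mp hw
    rcases eq_or_lt_of_le hk0 with h0 | hneg
    · -- l w = 0 : adjacent on both sides
      have hlw0 : l w = 0 := hk.trans h0
      refine iff_of_true ?_ ?_
      · exact aux_overlap hfuIoo (hIoo w) (by linarith) (by linarith)
      · exact aux_overlap hguIoo (hgIoo w hwne hw) (by linarith) (by linarith)
    · -- l w ≤ -1 : disjoint on both sides
      have hk1 : (k:ℝ) ≤ -1 := by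
        have h1 : k < 0 := by exact_mod_cast hneg
        have h2 : k ≤ -1 := by omega
        exact_mod_cast h2
      refine iff_of_false ?_ ?_
      · rintro ⟨x, hx1, hx2⟩
        rw [hu] at hx1
        have h2 := (hIcc w hx2).2
        have h3 := hx1.1
        linarith [hk, hk1]
      · rintro ⟨x, hx1, hx2⟩
        have h1 := (hguIcc hx1).1
        have h2 := (hgIcc w hwne hw hx2).2
        linarith [hk, hk1]
  -- case: u vs other
  have case_uO : ∀ w, w ≠ u → w ∉ S → ((f u ∩ f w).Nonempty ↔ (g u ∩ g w).Nonempty) := by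
    intro w hwne hwS
    have hnotk : ∀ k : ℤ, (k:ℝ) ≤ 0 → l w ≠ k := by
      intro k h1 h2
      exact hwS ((hSmem w).mpr ⟨hwne, k, h1, h2⟩)
    have hgw : g w = f w := hgO w hwne hwS
    rw [hgw]
    rcases lt_trichotomy (l w) 1 with hb1 | hb1 | hb1
    · rcases lt_trichotomy (l w) (-1) with hb2 | hb2 | hb2
      · -- l w < -1 : disjoint both sides
        refine iff_of_false ?_ ?_
        · rintro ⟨x, hx1, hx2⟩
          have h1 := (hfuIcc hx1).1
          have h2 := (hIcc w hx2).2
          linarith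
        · rintro ⟨x, hx1, hx2⟩
          have h1 := (hguIcc hx1).1
          have h2 := (hIcc w hx2).2
          linarith
      · exfalso
        exact hnotk (-1) (by norm_num) (by push_cast; exact hb2)
      · -- -1 < l w < 1 : adjacent both sides
        refine iff_of_true ?_ ?_
        · exact aux_overlap hfuIoo (hIoo w) (by linarith) (by linarith)
        · exact aux_overlap hguIoo (hIoo w) (by linarith) (by linarith)
    · -- l w = 1 : touching case
      have h1 : f u ⊆ Icc (0:ℝ) 1 := by rw [hu]; exact Ioc_subset_Icc_self
      have h1' : g u ⊆ Icc (0:ℝ) 1 := by rw [hgu]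
      have h2 : f w ⊆ Icc (1:ℝ) (l w + 1) := by
        intro x hx
        have hb := hIcc w hx
        exact ⟨by rw [← hb1]; exact hb.1, hb.2⟩
      rw [aux_touch h1 h2, aux_touch h1' h2]
      have hm1 : (1:ℝ) ∈ f u := by rw [hu]; norm_num
      have hm2 : (1:ℝ) ∈ g u := by rw [hgu]; norm_num
      simp [hm1, hm2]
    · -- l w > 1 : disjoint both sides
      refine iff_of_false ?_ ?_
      · rintro ⟨x, hx1, hx2⟩
        have h1 := (hfuIcc hx1).2
        have h2 := (hIcc w hx2).1
        linarith
      · rintro ⟨x, hx1, hx2⟩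
        have h1 := (hguIcc hx1).2
        have h2 := (hIcc w hx2).1
        linarith
  -- case: S vs S
  have case_SS : ∀ v ∈ S, ∀ w ∈ S, ((f v ∩ f w).Nonempty ↔ (g v ∩ g w).Nonempty) := by
    intro v hv w hw
    obtain ⟨hvne, _⟩ := (hSmem v).mp hv
    obtain ⟨hwne, _⟩ := (hSmem w).mp hw
    rw [hgS v hvne hv, hgS w hwne hw,
      ← Set.image_inter (f := fun x : ℝ => x - c) (fun a b hab => by dsimp at hab; linarith)]
    exact Set.image_nonempty.symm
  -- case: S vs other
  have case_SO : ∀ v ∈ S, ∀ w, w ≠ u → w ∉ S →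
      ((f v ∩ f w).Nonempty ↔ (g v ∩ g w).Nonempty) := by
    intro v hv w hwne hwS
    obtain ⟨hvne, k, hk0, hk⟩ := (hSmem v).mp hv
    have hnotk : ∀ m : ℤ, (m:ℝ) ≤ 0 → l w ≠ m := by
      intro m h1 h2
      exact hwS ((hSmem w).mpr ⟨hwne, m, h1, h2⟩)
    have hgw : g w = f w := hgO w hwne hwS
    rw [hgw]
    rcases lt_trichotomy (l w) (l v + 1) with hb1 | hb1 | hb1
    · rcases lt_trichotomy (l w) (l v - 1) with hb2 | hb2 | hb2
      · -- l w < l v - 1 : disjoint both sides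
        have hne : l w + 1 ≠ l v := by intro hh; linarith
        have hgapwv := hgap w v hne
        rw [abs_of_neg (by linarith)] at hgapwv
        refine iff_of_false ?_ ?_
        · rintro ⟨x, hx1, hx2⟩
          have h1 := (hIcc v hx1).1
          have h2 := (hIcc w hx2).2
          linarith
        · rintro ⟨x, hx1, hx2⟩
          have h1 := (hgIcc v hvne hv hx1).1
          have h2 := (hIcc w hx2).2
          linarith
      · -- l w = l v - 1 : impossible
        exfalso
        refine hnotk (k - 1) (by push_cast; linarith) ?_
        push_cast
        rw [hb2, hk]
      · -- overlap both sides
        have hne : l v + 1 ≠ l w := by intro hh; linarith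
        have hgapvw := hgap v w hne
        rw [abs_of_pos (by linarith)] at hgapvw
        refine iff_of_true ?_ ?_
        · exact aux_overlap (hIoo v) (hIoo w) (by linarith) (by linarith)
        · exact aux_overlap (hgIoo v hvne hv) (hIoo w) (by linarith) (by linarith)
    · -- l w = l v + 1 : touching, but left interval is right-open
      have hk0' : (k:ℝ) = 0 := by
        by_contra hne0
        have hklt : (k:ℝ) < 0 := lt_of_le_of_ne hk0 hne0
        have h1 : k < 0 := by exact_mod_cast hklt
        have h2 : (k:ℝ) ≤ -1 := by exact_mod_cast (by omega : k ≤ -1)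
        refine hnotk (k + 1) (by push_cast; linarith) ?_
        push_cast
        rw [hb1, hk]
      have hlv0 : l v = 0 := hk.trans hk0'
      have hlw1 : l w = 1 := by rw [hb1, hlv0]; norm_num
      have h1notin : (1:ℝ) ∉ f v := by
        rcases hl v with h|h|h|h
        · exfalso
          refine hno v ?_
          rw [h, hlv0]; norm_num
        · rw [h, hlv0]; norm_num
        · rw [h, hlv0]; norm_num
        · exfalso
          refine hvne (hinj ?_)
          rw [h, hu, hlv0]; norm_num
      refine iff_of_false ?_ ?_
      · rintro ⟨x, hx1, hx2⟩
        have e1 := (hIcc v hx1).2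
        have e2 := (hIcc w hx2).1
        have hx : x = 1 := by rw [hlv0] at e1; rw [hlw1] at e2; linarith
        rw [hx] at hx1
        exact h1notin hx1
      · rintro ⟨x, hx1, hx2⟩
        have e1 := (hgIcc v hvne hv hx1).2
        have e2 := (hIcc w hx2).1
        rw [hlv0] at e1; rw [hlw1] at e2
        linarith
    · -- l w > l v + 1 : disjoint both sides
      refine iff_of_false ?_ ?_
      · rintro ⟨x, hx1, hx2⟩
        have h1 := (hIcc v hx1).2
        have h2 := (hIcc w hx2).1
        linarith
      · rintro ⟨x, hx1, hx2⟩
        have h1 := (hgIcc v hvne hv hx1).2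
        have h2 := (hIcc w hx2).1
        linarith
  -- main equivalence
  have key : ∀ v w : V, v ≠ w → ((f v ∩ f w).Nonempty ↔ (g v ∩ g w).Nonempty) := by
    have hsymm : ∀ v w, ((f v ∩ f w).Nonempty ↔ (g v ∩ g w).Nonempty) →
        ((f w ∩ f v).Nonempty ↔ (g w ∩ g v).Nonempty) := by
      intro v w h
      rw [Set.inter_comm (f w), Set.inter_comm (g w)]; exact h
    intro v w hvw
    by_cases hv : v = u
    · subst hv
      by_cases hw : w ∈ S
      · exact case_uS w hw
      · exact case_uO w (Ne.symm hvw) hw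
    · by_cases hw : w = u
      · subst hw
        by_cases hv' : v ∈ S
        · exact hsymm _ _ (case_uS v hv')
        · exact hsymm _ _ (case_uO v hv hv')
      · by_cases hvS : v ∈ S
        · by_cases hwS : w ∈ S
          · exact case_SS v hvS w hwS
          · exact case_SO v hvS w hw hwS
        · by_cases hwS : w ∈ S
          · exact hsymm _ _ (case_SO w hwS v hv hvS)
          · rw [hgO v hv hvS, hgO w hw hwS]
  refine ⟨g, ?_, ?_, ?_, ?_⟩
  · intro v w hvw
    exact (hrep v w hvw).trans (key v w hvw)
  · intro v
    by_cases hv : v = u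
    · subst hv
      rw [hgu]
      exact Or.inl ⟨0, by norm_num⟩
    · by_cases hvS : v ∈ S
      · rw [hgS v hv hvS]
        exact aux_shift_unit c _ (hunit v)
      · rw [hgO v hv hvS]
        exact hunit v
  · have hset : {v | IsUnitOC (g v)} = {v | IsUnitOC (f v)} \ {u} := by
      ext v
      simp only [mem_setOf_eq, mem_diff, mem_singleton_iff]
      by_cases hv : v = u
      · subst hv
        refine iff_of_false ?_ (by tauto)
        rw [hgu]
        exact aux_not_OC (x := 0) (Or.inl (by norm_num))
      · by_cases hvS : v ∈ S
        · rw [hgS v hv hvS, aux_shift_OC]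
          simp [hv]
        · rw [hgO v hv hvS]
          simp [hv]
    rw [hset]
    have hmem : u ∈ {v | IsUnitOC (f v)} := ⟨0, by rw [hu]; norm_num⟩
    exact Set.ncard_diff_singleton_lt_of_mem hmem (Set.toFinite _)
  · have hset : {v | IsUnitCO (g v)} = {v | IsUnitCO (f v)} := by
      ext v
      simp only [mem_setOf_eq]
      by_cases hv : v = u
      · subst hv
        refine iff_of_false ?_ ?_
        · rw [hgu]
          exact aux_not_CO (x := 0) (Or.inl (by norm_num))
        · rw [hu]
          exact aux_not_CO (x := 0) (Or.inr (Or.inr (by norm_num)))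
      · by_cases hvS : v ∈ S
        · rw [hgS v hv hvS, aux_shift_CO]
        · rw [hgO v hv hvS]
    rw [hset]
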